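/- Let F be a set system on a set X of VC dimension at most d, and ε > 0. Then there exists n = n(d, ε) such that: for every finitely additive probability measure μ on the power set of X which is ε/2-approximable by finite averages with respect to F (i.e. there exist points approximating μ on F up to ε/2), there exist points a₁,…,aₙ ∈ X such that |μ(S) − (1/n)|{i : a_i ∈ S}|| ≤ ε for all S ∈ F. -/

import Mathlib

/-- `F` shatters the finite set `A`. -/
def Shatters {X : Type*} (F : Set (Set X)) (A : Finset X) : Prop :=
  ∀ B ⊆ A, ∃ S ∈ F, ∀ x ∈ A, (x ∈ B ↔ x ∈ S)

/-- The VC dimension of `F` is at most `d`. -/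
def VCDimLE {X : Type*} (F : Set (Set X)) (d : ℕ) : Prop :=
  ∀ A : Finset X, Shatters F A → A.card ≤ d

def IsFAP {X : Type*} (m : Set X → ℝ) : Prop :=
  m Set.univ = 1 ∧ (∀ A, 0 ≤ m A) ∧
    ∀ A C : Set X, Disjoint A C → m (A ∪ C) = m A + m C

open Finset

namespace VCP
open scoped Classical

/-- counting maps with all fibers even -/
lemma evenFiber_card (s k : ℕ) (hk : 0 < k) :
    #(univ.filter (fun f : Fin (2*k) → Fin s =>
      ∀ i, Even #(univ.filter (fun j => f j = i)))) ≤ s^k * k^(2*k) := by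
  classical
  set E := univ.filter (fun f : Fin (2*k) → Fin s =>
      ∀ i, Even #(univ.filter (fun j => f j = i))) with hE
  have hsub : E ⊆ (univ : Finset ((Fin k → Fin s) × (Fin (2*k) → Fin k))).image
      (fun gh => gh.1 ∘ gh.2) := by
    intro f hf
    rw [hE, mem_filter] at hf
    have hall := hf.2
    have h2k : 0 < 2*k := by omega
    -- image and its cardinality
    set I := univ.image f with hI
    have hcard : 2*k = ∑ i ∈ I, #(univ.filter (fun j => f j = i)) := by
      simpa using Finset.card_eq_sum_card_image f (univ : Finset (Fin (2*k)))
    have hge : ∀ i ∈ I, 2 ≤ #(univ.filter (fun j => f j = i)) := by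
      intro i hi
      rcases mem_image.1 hi with ⟨j, _, rfl⟩
      have hpos : 0 < #(univ.filter (fun j' => f j' = f j)) :=
        card_pos.2 ⟨j, by simp⟩
      rcases hall (f j) with ⟨c, hc⟩
      omega
    have hIk : #I ≤ k := by
      have : 2 * #I ≤ ∑ i ∈ I, #(univ.filter (fun j => f j = i)) := by
        calc 2 * #I = ∑ _i ∈ I, 2 := by simp [mul_comm]
        _ ≤ _ := Finset.sum_le_sum hge
      omega
    set c := #I with hc
    have e := I.orderIsoOfFin (rfl : #I = c)
    refine mem_image.2 ⟨⟨fun j => if h : (j : ℕ) < c then (e ⟨j, h⟩ : Fin s) else f ⟨0, h2k⟩,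
      fun j => ⟨(e.symm ⟨f j, mem_image.2 ⟨j, mem_univ _, rfl⟩⟩ : Fin c), 
        lt_of_lt_of_le (e.symm ⟨f j, mem_image.2 ⟨j, mem_univ _, rfl⟩⟩).isLt hIk⟩⟩,
      mem_univ _, ?_⟩
    funext j
    simp only [Function.comp_apply]
    rw [dif_pos (e.symm ⟨f j, mem_image.2 ⟨j, mem_univ _, rfl⟩⟩).isLt]
    have : (⟨((e.symm ⟨f j, mem_image.2 ⟨j, mem_univ _, rfl⟩⟩ : Fin c) : ℕ),
        (e.symm ⟨f j, mem_image.2 ⟨j, mem_univ _, rfl⟩⟩).isLt⟩ : Fin c)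
        = e.symm ⟨f j, mem_image.2 ⟨j, mem_univ _, rfl⟩⟩ := by
      apply Fin.ext; rfl
    rw [this]
    simp
  calc #E ≤ _ := card_le_card hsub
    _ ≤ #(univ : Finset ((Fin k → Fin s) × (Fin (2*k) → Fin k))) := card_image_le
    _ = s^k * k^(2*k) := by
      simp [Fintype.card_fun]
def Dsum {s : ℕ} (σ : Fin s → Bool) (A : Finset (Fin s)) : ℤ :=
  ∑ i ∈ A, (if σ i then (1:ℤ) else -1)

lemma factor_even_le (s : ℕ) (A : Finset (Fin s)) (i : Fin s) (e : ℕ) (he : Even e) :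
    (0:ℤ) ≤ (∑ b : Bool, (if i ∈ A then (if b then (1:ℤ) else -1) else 0) ^ e)
    ∧ (∑ b : Bool, (if i ∈ A then (if b then (1:ℤ) else -1) else 0) ^ e) ≤ 2 := by
  rw [Fintype.sum_bool]
  by_cases hiA : i ∈ A
  · rw [if_pos hiA, if_pos hiA, if_pos rfl, if_neg (by simp), one_pow, Even.neg_one_pow he]
    norm_num
  · rw [if_neg hiA, if_neg hiA]
    rcases Nat.eq_zero_or_pos e with h0 | h0
    · subst h0; norm_num
    · rw [zero_pow (by omega)]; norm_num

lemma factor_odd (s : ℕ) (A : Finset (Fin s)) (i : Fin s) (e : ℕ) (he : ¬ Even e) :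
    (∑ b : Bool, (if i ∈ A then (if b then (1:ℤ) else -1) else 0) ^ e) = 0 := by
  rw [Fintype.sum_bool]
  by_cases hiA : i ∈ A
  · rw [if_pos hiA, if_pos hiA, if_pos rfl, if_neg (by simp), one_pow,
      Odd.neg_one_pow (Nat.not_even_iff_odd.1 he)]
    ring
  · rw [if_neg hiA, if_neg hiA, zero_pow (by rcases Nat.not_even_iff_odd.1 he with ⟨c,hc⟩; omega)]
    ring

lemma moment (s k : ℕ) (hk : 0 < k) (A : Finset (Fin s)) :
    ∑ σ : Fin s → Bool, (Dsum σ A)^(2*k) ≤ 2^s * (s^k * k^(2*k)) := by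
  classical
  have hD : ∀ σ : Fin s → Bool, Dsum σ A
      = ∑ i : Fin s, (if i ∈ A then (if σ i then (1:ℤ) else -1) else 0) := by
    intro σ
    rw [Dsum, ← Finset.sum_filter]
    congr 1
    simp [Finset.filter_mem_eq_inter]
  have hexp : ∀ σ : Fin s → Bool, (Dsum σ A)^(2*k)
      = ∑ f : Fin (2*k) → Fin s, ∏ j : Fin (2*k),
          (if f j ∈ A then (if σ (f j) then (1:ℤ) else -1) else 0) := by
    intro σ
    rw [hD σ]
    exact Fintype.sum_pow (fun i => if i ∈ A then (if σ i then (1:ℤ) else -1) else 0) (2*k)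
  calc ∑ σ : Fin s → Bool, (Dsum σ A)^(2*k)
      = ∑ f : Fin (2*k) → Fin s, ∑ σ : Fin s → Bool, ∏ j : Fin (2*k),
          (if f j ∈ A then (if σ (f j) then (1:ℤ) else -1) else 0) := by
        simp_rw [hexp]; rw [Finset.sum_comm]
    _ ≤ ∑ f : Fin (2*k) → Fin s,
          (if (∀ i, Even #(univ.filter (fun j => f j = i))) then (2:ℤ)^s else 0) := by
        apply Finset.sum_le_sum
        intro f _
        have hfib : ∀ σ : Fin s → Bool, ∏ j : Fin (2*k),
            (if f j ∈ A then (if σ (f j) then (1:ℤ) else -1) else 0)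
            = ∏ i : Fin s, (if i ∈ A then (if σ i then (1:ℤ) else -1) else 0)
                ^ #(univ.filter (fun j => f j = i)) := by
          intro σ
          rw [Finset.prod_comp (fun i => (if i ∈ A then (if σ i then (1:ℤ) else -1) else 0)) f]
          apply Finset.prod_subset (subset_univ _)
          intro i _ hi
          have : (univ.filter (fun j => f j = i)) = ∅ := by
            rw [Finset.filter_eq_empty_iff]
            intro j _ hj
            exact hi (mem_image.2 ⟨j, mem_univ _, hj⟩)
          rw [this]
          simp
        simp_rw [hfib]
        have hfact : ∑ σ : Fin s → Bool, ∏ i : Fin s,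
            (if i ∈ A then (if σ i then (1:ℤ) else -1) else 0)
              ^ #(univ.filter (fun j => f j = i))
            = ∏ i : Fin s, ∑ b : Bool,
            (if i ∈ A then (if b then (1:ℤ) else -1) else 0)
              ^ #(univ.filter (fun j => f j = i)) := by
          rw [← Finset.sum_prod_piFinset]
          apply Finset.sum_nbij' (fun σ => σ) (fun σ => σ) <;>
            simp [Fintype.mem_piFinset]
        rw [hfact]
        by_cases hev : ∀ i, Even #(univ.filter (fun j => f j = i))
        · rw [if_pos hev]
          calc ∏ i : Fin s, ∑ b : Bool,
              (if i ∈ A then (if b then (1:ℤ) else -1) else 0)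
                ^ #(univ.filter (fun j => f j = i))
              ≤ ∏ _i : Fin s, (2:ℤ) := by
                apply Finset.prod_le_prod
                · exact fun i _ => (factor_even_le s A i _ (hev i)).1
                · exact fun i _ => (factor_even_le s A i _ (hev i)).2
            _ = 2^s := by simp
        · rw [if_neg hev]
          push_neg at hev
          rcases hev with ⟨i₀, hi₀⟩
          exact le_of_eq (Finset.prod_eq_zero (mem_univ i₀) (factor_odd s A i₀ _ hi₀))
    _ ≤ 2^s * (s^k * k^(2*k)) := by
        rw [← Finset.sum_filter]
        simp only [Finset.sum_const, nsmul_eq_mul]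
        rw [mul_comm]
        have := evenFiber_card s k hk
        gcongr
        exact_mod_cast this
lemma sum_choose_le (s d : ℕ) : ∑ i ∈ range (d+1), Nat.choose s i ≤ (s+1)^d := by
  induction d with
  | zero => simp
  | succ d ih =>
    rw [Finset.sum_range_succ]
    have h1 : Nat.choose s (d+1) ≤ s^(d+1) := Nat.choose_le_pow _ _
    have h2 : s^(d+1) ≤ s * (s+1)^d := by
      rw [pow_succ, mul_comm]
      exact Nat.mul_le_mul_left s (Nat.pow_le_pow_left (by omega) d)
    calc ∑ i ∈ range (d+1), Nat.choose s i + Nat.choose s (d+1)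
        ≤ (s+1)^d + s * (s+1)^d := by omega
      _ = (s+1)^(d+1) := by ring

lemma key_numeric (s t d : ℕ) (hs : 2^(d+1) * (2*d+2)^(2*(2*d+2)) < s) (ht : s^3 ≤ t^4) :
    ((s+1)^d + 1) * (s^(2*d+2) * (2*d+2)^(2*(2*d+2))) < t^(2*(2*d+2)) := by
  set k := 2*d+2 with hk
  have hs1 : 1 ≤ s := by
    have : 0 ≤ 2^(d+1) * k^(2*k) := Nat.zero_le _
    omega
  have h1 : (s+1)^d + 1 ≤ 2^(d+1) * s^d := by
    have ha : (s+1)^d ≤ 2^d * s^d := by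
      rw [← mul_pow]
      exact Nat.pow_le_pow_left (by omega) d
    have hb : 1 ≤ 2^d * s^d := Nat.one_le_iff_ne_zero.2 (Nat.mul_ne_zero (Nat.pos_iff_ne_zero.1 (pow_pos (by omega) d)) (Nat.pos_iff_ne_zero.1 (pow_pos (by omega) d)))
    have : 2^(d+1) * s^d = 2^d * s^d + 2^d * s^d := by ring
    omega
  calc ((s+1)^d + 1) * (s^(2*d+2) * k^(2*k))
      ≤ (2^(d+1) * s^d) * (s^(2*d+2) * k^(2*k)) := Nat.mul_le_mul_right _ h1
    _ = (2^(d+1) * k^(2*k)) * (s^d * s^(2*d+2)) := by ring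
    _ < s * (s^d * s^(2*d+2)) := by
        have hp : 0 < s^d * s^(2*d+2) := Nat.mul_pos (pow_pos (by omega) _) (pow_pos (by omega) _)
        exact (Nat.mul_lt_mul_right hp).2 hs
    _ = (s^3)^(d+1) := by rw [← pow_mul, ← pow_add, ← pow_succ']; ring_nf
    _ ≤ (t^4)^(d+1) := Nat.pow_le_pow_left ht _
    _ = t^(2*k) := by rw [← pow_mul, hk]; ring_nf

lemma good_sign (s t d : ℕ) (𝒯 : Finset (Finset (Fin s)))
    (h𝒯 : #𝒯 ≤ (s+1)^d)
    (hs : 2^(d+1) * (2*d+2)^(2*(2*d+2)) < s) (ht : s^3 ≤ t^4) :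
    ∃ σ : Fin s → Bool, (∀ A ∈ 𝒯, |Dsum σ A| ≤ (t:ℤ)) ∧ |Dsum σ univ| ≤ (t:ℤ) := by
  classical
  set k := 2*d+2 with hk
  have hkpos : 0 < k := by omega
  have htpos : 0 < t := by
    rcases Nat.eq_zero_or_pos t with h0 | h; swap; · exact h
    exfalso
    have hspos : 0 < s := Nat.lt_of_le_of_lt (Nat.zero_le _) hs
    rw [h0] at ht
    simp at ht
    have h3 := pow_pos hspos 3
    omega
  set 𝒰 := insert (univ : Finset (Fin s)) 𝒯 with h𝒰
  set bad := fun A : Finset (Fin s) => univ.filter (fun σ : Fin s → Bool => (t:ℤ) ≤ |Dsum σ A|)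
    with hbad
  have hmar : ∀ A : Finset (Fin s), #(bad A) * t^(2*k) ≤ 2^s * (s^k * k^(2*k)) := by
    intro A
    have h1 : ((#(bad A) * t^(2*k) : ℕ) : ℤ) ≤ ∑ σ ∈ bad A, (Dsum σ A)^(2*k) := by
      push_cast
      rw [← nsmul_eq_mul]
      apply Finset.card_nsmul_le_sum
      intro σ hσ
      rw [hbad, mem_filter] at hσ
      calc ((t:ℤ))^(2*k) ≤ |Dsum σ A|^(2*k) := by
            apply pow_le_pow_left₀ (by positivity) hσ.2
        _ = (Dsum σ A)^(2*k) := by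
            rw [← abs_pow, abs_of_nonneg (Even.pow_nonneg ⟨k, by ring⟩ _)]
    have h2 : ∑ σ ∈ bad A, (Dsum σ A)^(2*k) ≤ ∑ σ : Fin s → Bool, (Dsum σ A)^(2*k) := by
      apply Finset.sum_le_sum_of_subset_of_nonneg (Finset.filter_subset _ _)
      intro σ _ _
      exact Even.pow_nonneg ⟨k, by ring⟩ _
    have h3 := moment s k hkpos A
    have : ((#(bad A) * t^(2*k) : ℕ) : ℤ) ≤ ((2^s * (s^k * k^(2*k)) : ℕ) : ℤ) := by
      push_cast at *
      linarith
    exact_mod_cast this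
  have hcard : #(𝒰.biUnion bad) < 2^s := by
    have h1 : #(𝒰.biUnion bad) * t^(2*k) ≤ ∑ A ∈ 𝒰, #(bad A) * t^(2*k) := by
      rw [← Finset.sum_mul]
      exact Nat.mul_le_mul_right _ (Finset.card_biUnion_le)
    have h2 : ∑ A ∈ 𝒰, #(bad A) * t^(2*k) ≤ #𝒰 * (2^s * (s^k * k^(2*k))) := by
      calc ∑ A ∈ 𝒰, #(bad A) * t^(2*k) ≤ ∑ _A ∈ 𝒰, 2^s * (s^k * k^(2*k)) :=
            Finset.sum_le_sum (fun A _ => hmar A)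
        _ = #𝒰 * (2^s * (s^k * k^(2*k))) := by rw [Finset.sum_const, smul_eq_mul]
    have h𝒰c : #𝒰 ≤ (s+1)^d + 1 := by
      calc #𝒰 ≤ #𝒯 + 1 := Finset.card_insert_le _ _
        _ ≤ (s+1)^d + 1 := by omega
    have hKey := key_numeric s t d hs ht
    have h4 : #(𝒰.biUnion bad) * t^(2*k) < 2^s * t^(2*k) := by
      calc #(𝒰.biUnion bad) * t^(2*k) ≤ #𝒰 * (2^s * (s^k * k^(2*k))) := le_trans h1 h2
        _ ≤ ((s+1)^d + 1) * (2^s * (s^k * k^(2*k))) := Nat.mul_le_mul_right _ h𝒰c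
        _ = 2^s * (((s+1)^d + 1) * (s^(2*d+2) * (2*d+2)^(2*(2*d+2)))) := by rw [hk]; ring
        _ < 2^s * t^(2*(2*d+2)) := by
            exact (Nat.mul_lt_mul_left (by positivity)).2 hKey
        _ = 2^s * t^(2*k) := by rw [hk]
    exact Nat.lt_of_mul_lt_mul_right h4
  have hne : (univ \ 𝒰.biUnion bad).Nonempty := by
    rw [← Finset.card_pos, Finset.card_sdiff_of_subset (Finset.subset_univ _)]
    have huc : #(univ : Finset (Fin s → Bool)) = 2^s := by
      simp [Fintype.card_fun]
    omega
  rcases hne with ⟨σ, hσ⟩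
  rw [Finset.mem_sdiff] at hσ
  have hgood : ∀ A ∈ 𝒰, |Dsum σ A| ≤ (t:ℤ) := by
    intro A hA
    by_contra hcon
    push_neg at hcon
    exact hσ.2 (Finset.mem_biUnion.2 ⟨A, hA,
      by rw [hbad, mem_filter]; exact ⟨mem_univ _, hcon.le⟩⟩)
  exact ⟨σ, fun A hA => hgood A (Finset.mem_insert_of_mem hA),
    hgood _ (Finset.mem_insert_self _ _)⟩
noncomputable def emp {X : Type} {q : ℕ} (b : Fin q → X) (S : Set X) : ℝ :=
  (∑ i : Fin q, S.indicator (fun _ => (1:ℝ)) (b i)) / q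

lemma emp_eq {X : Type} {q : ℕ} (b : Fin q → X) (S : Set X) :
    emp b S = #(univ.filter (fun i => b i ∈ S)) / q := by
  classical
  rw [emp]
  congr 1
  rw [← Finset.sum_boole]
  apply Finset.sum_congr rfl
  intro i _
  rw [Set.indicator_apply]

lemma halving {X : Type} (F : Set (Set X)) (d : ℕ) (hF : VCDimLE F d) (r t : ℕ)
    (hr : 2^(d+1) * (2*d+2)^(2*(2*d+2)) < 2*r) (ht : (2*r)^3 ≤ t^4)
    (b : Fin (2*r) → X) :
    ∃ b' : Fin r → X, ∀ S ∈ F, |emp b' S - emp b S| ≤ (2*t : ℝ)/(2*r) := by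
  classical
  have hrpos : 0 < r := by
    have : 0 ≤ 2^(d+1) * (2*d+2)^(2*(2*d+2)) := Nat.zero_le _
    omega
  set tr : Set X → Finset (Fin (2*r)) := fun S => univ.filter (fun i => b i ∈ S) with htr
  set 𝒯 : Finset (Finset (Fin (2*r))) := univ.filter (fun A => ∃ S ∈ F, A = tr S) with h𝒯
  -- every finset shattered by 𝒯 has card ≤ d
  have hshat : ∀ A : Finset (Fin (2*r)), 𝒯.Shatters A → #A ≤ d := by
    intro A hA
    have hinj : Set.InjOn b A := by
      intro i hi i' hi' hbe
      by_contra hne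
      have hiA : i ∈ A := hi
      have hiA' : i' ∈ A := hi'
      obtain ⟨u, hu𝒯, huA⟩ := hA (Finset.singleton_subset_iff.2 hiA)
      rw [h𝒯, mem_filter] at hu𝒯
      obtain ⟨S, hSF, rfl⟩ := hu𝒯.2
      have hiu : i ∈ A ∩ tr S := by rw [huA]; exact Finset.mem_singleton_self i
      have hbiS : b i ∈ S := by
        have := (Finset.mem_inter.1 hiu).2
        simp only [htr, mem_filter] at this
        exact this.2
      have hi'u : i' ∈ A ∩ tr S := by
        refine Finset.mem_inter.2 ⟨hiA', ?_⟩
        simp only [htr, mem_filter]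
        exact ⟨mem_univ _, by rw [← hbe]; exact hbiS⟩
      rw [huA, Finset.mem_singleton] at hi'u
      exact hne hi'u.symm
    have hcardim : #(A.image b) = #A := Finset.card_image_of_injOn hinj
    have hshatF : _root_.Shatters F (A.image b) := by
      intro B hB
      obtain ⟨u, hu, huA⟩ := hA (Finset.filter_subset (fun i => b i ∈ B) A)
      rw [h𝒯, mem_filter] at hu
      obtain ⟨S, hSF, rfl⟩ := hu.2
      refine ⟨S, hSF, ?_⟩
      intro x hx
      rcases Finset.mem_image.1 hx with ⟨i, hiA, rfl⟩
      constructor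
      · intro hxB
        have hmem : i ∈ A ∩ tr S := by rw [huA]; exact mem_filter.2 ⟨hiA, hxB⟩
        have := (Finset.mem_inter.1 hmem).2
        simp only [htr, mem_filter] at this
        exact this.2
      · intro hxS
        have hmem : i ∈ A ∩ tr S :=
          Finset.mem_inter.2 ⟨hiA, by simp only [htr, mem_filter]; exact ⟨mem_univ _, hxS⟩⟩
        rw [huA] at hmem
        exact (mem_filter.1 hmem).2
    calc #A = #(A.image b) := hcardim.symm
      _ ≤ d := hF _ hshatF
  have hSauer : #𝒯 ≤ (2*r+1)^d := by
    have h2 : 𝒯.shatterer ⊆ (range (d+1)).biUnion (fun i => Finset.powersetCard i univ) := by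
      intro A hA
      rw [Finset.mem_shatterer] at hA
      exact Finset.mem_biUnion.2 ⟨#A, Finset.mem_range.2 (Nat.lt_succ_of_le (hshat A hA)),
        Finset.mem_powersetCard.2 ⟨Finset.subset_univ _, rfl⟩⟩
    calc #𝒯 ≤ #𝒯.shatterer := Finset.card_le_card_shatterer 𝒯
      _ ≤ #((range (d+1)).biUnion fun i => Finset.powersetCard i univ) := card_le_card h2
      _ ≤ ∑ i ∈ range (d+1), #(Finset.powersetCard i (univ : Finset (Fin (2*r)))) :=
          card_biUnion_le
      _ = ∑ i ∈ range (d+1), Nat.choose (2*r) i := by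
          apply Finset.sum_congr rfl
          intro i _
          rw [Finset.card_powersetCard, card_univ, Fintype.card_fin]
      _ ≤ (2*r+1)^d := sum_choose_le _ _
  obtain ⟨σ, hσ1, hσ2⟩ := good_sign (2*r) t d 𝒯 hSauer hr ht
  set P := univ.filter (fun i => σ i = true) with hP
  have hfilter : ∀ A : Finset (Fin (2*r)), A.filter (fun i => σ i = true) = A ∩ P := by
    intro A
    ext x
    simp [hP, Finset.mem_filter, Finset.mem_inter]
  have hDP : ∀ A : Finset (Fin (2*r)), Dsum σ A = 2*(#(A ∩ P) : ℤ) - #A := by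
    intro A
    rw [Dsum, Finset.sum_ite, Finset.sum_const, Finset.sum_const, hfilter]
    have hcc := Finset.card_filter_add_card_filter_not
      (s := A) (p := fun i => σ i = true)
    rw [hfilter] at hcc
    simp only [nsmul_eq_mul, mul_one, mul_neg_one]
    push_cast
    omega
  have h2 : |2*(#P:ℤ) - 2*r| ≤ t := by
    have := hσ2
    rw [hDP univ, Finset.univ_inter, Finset.card_univ, Fintype.card_fin] at this
    exact_mod_cast this
  -- obtain a balanced Q
  have hQ : ∃ Q : Finset (Fin (2*r)), #Q = r ∧
      ∀ A ∈ 𝒯, |2*(#(A ∩ Q) : ℤ) - #A| ≤ 2*t := by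
    rcases le_or_gt r #P with hPr | hPr
    · obtain ⟨Q, hQP, hQcard⟩ := Finset.exists_subset_card_eq hPr
      refine ⟨Q, hQcard, fun A hA => ?_⟩
      have h1 := hσ1 A hA
      rw [hDP A] at h1
      have hsub : A ∩ P ⊆ (A ∩ Q) ∪ (P \ Q) := by
        intro x hx
        rw [Finset.mem_inter] at hx
        by_cases hxQ : x ∈ Q
        · exact Finset.mem_union_left _ (Finset.mem_inter.2 ⟨hx.1, hxQ⟩)
        · exact Finset.mem_union_right _ (Finset.mem_sdiff.2 ⟨hx.2, hxQ⟩)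
      have hcP : #(A ∩ P) ≤ #(A ∩ Q) + (#P - r) := by
        calc #(A ∩ P) ≤ #((A ∩ Q) ∪ (P \ Q)) := card_le_card hsub
          _ ≤ #(A ∩ Q) + #(P \ Q) := Finset.card_union_le _ _
          _ = #(A ∩ Q) + (#P - r) := by rw [Finset.card_sdiff_of_subset hQP, hQcard]
      have hcQ : #(A ∩ Q) ≤ #(A ∩ P) :=
        card_le_card (Finset.inter_subset_inter (Finset.Subset.refl A) hQP)
      rw [abs_le] at h1 h2 ⊢
      omega
    · obtain ⟨Q, hPQ, hQcard⟩ := Finset.exists_superset_card_eq hPr.le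
        (by simp [Fintype.card_fin]; omega)
      refine ⟨Q, hQcard, fun A hA => ?_⟩
      have h1 := hσ1 A hA
      rw [hDP A] at h1
      have hsub : A ∩ Q ⊆ (A ∩ P) ∪ (Q \ P) := by
        intro x hx
        rw [Finset.mem_inter] at hx
        by_cases hxP : x ∈ P
        · exact Finset.mem_union_left _ (Finset.mem_inter.2 ⟨hx.1, hxP⟩)
        · exact Finset.mem_union_right _ (Finset.mem_sdiff.2 ⟨hx.2, hxP⟩)
      have hcQ : #(A ∩ Q) ≤ #(A ∩ P) + (r - #P) := by
        calc #(A ∩ Q) ≤ #((A ∩ P) ∪ (Q \ P)) := card_le_card hsub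
          _ ≤ #(A ∩ P) + #(Q \ P) := Finset.card_union_le _ _
          _ = #(A ∩ P) + (r - #P) := by rw [Finset.card_sdiff_of_subset hPQ, hQcard]
      have hcP : #(A ∩ P) ≤ #(A ∩ Q) :=
        card_le_card (Finset.inter_subset_inter (Finset.Subset.refl A) hPQ)
      rw [abs_le] at h1 h2 ⊢
      omega
  obtain ⟨Q, hQcard, hQ⟩ := hQ
  refine ⟨fun i => b ((Q.orderIsoOfFin hQcard i : Fin (2*r))), ?_⟩
  intro S hS
  have htrS : tr S ∈ 𝒯 := by
    rw [h𝒯, mem_filter]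
    exact ⟨mem_univ _, S, hS, rfl⟩
  have hkey := hQ (tr S) htrS
  have hcount : #(univ.filter (fun i : Fin r =>
      b ((Q.orderIsoOfFin hQcard i : Fin (2*r))) ∈ S)) = #(tr S ∩ Q) := by
    apply Finset.card_bij (fun i _ => ((Q.orderIsoOfFin hQcard i : Fin (2*r))))
    · intro i hi
      rw [mem_filter] at hi
      exact Finset.mem_inter.2 ⟨by simp only [htr, mem_filter]; exact ⟨mem_univ _, hi.2⟩,
        (Q.orderIsoOfFin hQcard i).2⟩
    · intro i _ i' _ h
      exact (Q.orderIsoOfFin hQcard).injective (Subtype.ext h)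
    · intro x hx
      rw [Finset.mem_inter] at hx
      refine ⟨(Q.orderIsoOfFin hQcard).symm ⟨x, hx.2⟩, ?_, ?_⟩
      · rw [mem_filter]
        refine ⟨mem_univ _, ?_⟩
        rw [OrderIso.apply_symm_apply]
        have := hx.1
        simp only [htr, mem_filter] at this
        exact this.2
      · rw [OrderIso.apply_symm_apply]
  rw [emp_eq, emp_eq, hcount]
  have hrne : ((r:ℝ)) ≠ 0 := Nat.cast_ne_zero.2 (by omega)
  have h2rne : ((2*r : ℕ):ℝ) ≠ 0 := Nat.cast_ne_zero.2 (by omega)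
  have heq : (#(tr S ∩ Q) : ℝ) / (r:ℕ) - (#(univ.filter (fun i => b i ∈ S)) : ℝ) / ((2*r : ℕ))
      = ((2*(#(tr S ∩ Q) : ℤ) - #(tr S) : ℤ) : ℝ) / ((2*r : ℕ)) := by

    push_cast
    field_simp
    ring
  rw [heq, abs_div, abs_of_nonneg (by positivity : (0:ℝ) ≤ ((2*r:ℕ):ℝ))]
  have hnum : |((2*(#(tr S ∩ Q) : ℤ) - (#(tr S):ℤ) : ℤ) : ℝ)| ≤ (2*(t:ℝ)) := by
    rw [← Int.cast_abs]
    exact_mod_cast hkey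
  have h2r : ((2*r:ℕ):ℝ) = 2*(r:ℝ) := by push_cast; ring
  rw [h2r]
  gcongr
def tfun (s : ℕ) : ℕ := Nat.sqrt (Nat.sqrt (s^3)) + 1

lemma tfun_lower (s : ℕ) : s^3 ≤ (tfun s)^4 := by
  rw [tfun]
  have h1 : s^3 < (Nat.sqrt (s^3) + 1)^2 := Nat.lt_succ_sqrt' (s^3)
  have h2 : Nat.sqrt (s^3) < (Nat.sqrt (Nat.sqrt (s^3)) + 1)^2 := Nat.lt_succ_sqrt' _
  calc s^3 ≤ (Nat.sqrt (s^3) + 1)^2 := h1.le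
    _ ≤ ((Nat.sqrt (Nat.sqrt (s^3)) + 1)^2)^2 := Nat.pow_le_pow_left (by omega) 2
    _ = (Nat.sqrt (Nat.sqrt (s^3)) + 1)^4 := by ring

lemma tfun_upper (s : ℕ) (hs : 1 ≤ s) : (tfun s)^4 ≤ 16 * s^3 := by
  rw [tfun]
  have hu : 1 ≤ Nat.sqrt (Nat.sqrt (s^3)) := by
    have h0 : 0 < s^3 := pow_pos hs 3
    have h1 := Nat.sqrt_pos.2 h0
    have h2 := Nat.sqrt_pos.2 h1
    omega
  have h2 : (Nat.sqrt (Nat.sqrt (s^3)))^2 ≤ Nat.sqrt (s^3) := Nat.sqrt_le' _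
  have h3 : (Nat.sqrt (s^3))^2 ≤ s^3 := Nat.sqrt_le' _
  calc (Nat.sqrt (Nat.sqrt (s^3)) + 1)^4 ≤ (2*Nat.sqrt (Nat.sqrt (s^3)))^4 :=
        Nat.pow_le_pow_left (by omega) 4
    _ = 16 * ((Nat.sqrt (Nat.sqrt (s^3)))^2)^2 := by ring
    _ ≤ 16 * (Nat.sqrt (s^3))^2 := Nat.mul_le_mul_left 16 (Nat.pow_le_pow_left h2 2)
    _ ≤ 16 * s^3 := Nat.mul_le_mul_left 16 h3

lemma iterate {X : Type} (F : Set (Set X)) (d : ℕ) (hF : VCDimLE F d) (n : ℕ)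
    (hn : 2^(d+1) * (2*d+2)^(2*(2*d+2)) < n) :
    ∀ T : ℕ, ∀ b : Fin (n*2^T) → X, ∃ b' : Fin n → X,
      ∀ S ∈ F, |emp b' S - emp b S| ≤
        ∑ j ∈ range T, 2*(tfun (n*2^(j+1)) : ℝ)/((n:ℝ)*2^(j+1)) := by
  intro T
  induction T with
  | zero =>
    intro b
    refine ⟨fun i => b (Fin.cast (by ring) i), ?_⟩
    intro S hS
    have hemp : emp (fun i : Fin n => b (Fin.cast (by ring : n = n*2^0) i)) S = emp b S := by
      rw [emp, emp]
      congr 1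
      · exact Fintype.sum_equiv (finCongr (by ring : n = n*2^0))
          _ _ (fun i => by congr 1)
      · norm_num
    rw [hemp]
    simp
  | succ T ih =>
    intro b
    have hcast : n*2^(T+1) = 2*(n*2^T) := by ring
    set b₀ : Fin (2*(n*2^T)) → X := fun i => b (Fin.cast hcast.symm i) with hb₀
    have hemp0 : ∀ S : Set X, emp b₀ S = emp b S := by
      intro S
      rw [emp, emp]
      congr 1
      · exact Fintype.sum_equiv (finCongr hcast.symm) _ _ (fun i => rfl)
      · rw [hcast]
    have hr : 2^(d+1) * (2*d+2)^(2*(2*d+2)) < 2*(n*2^T) := by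
      apply lt_of_lt_of_le hn
      have h1 : 1 ≤ 2^T := Nat.one_le_two_pow
      calc n = n*1 := by ring
        _ ≤ n*2^T := Nat.mul_le_mul_left n h1
        _ ≤ 2*(n*2^T) := by omega
    obtain ⟨b₁, hb₁⟩ := halving F d hF (n*2^T) (tfun (2*(n*2^T))) hr (tfun_lower _) b₀
    obtain ⟨b', hb'⟩ := ih b₁
    refine ⟨b', fun S hS => ?_⟩
    have htri : |emp b' S - emp b S| ≤ |emp b' S - emp b₁ S| + |emp b₁ S - emp b S| :=
      abs_sub_le _ _ _
    have h1 := hb' S hS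
    have h2 := hb₁ S hS
    rw [hemp0 S] at h2
    have hlast : (2*(tfun (2*(n*2^T)) : ℝ))/(2*((n*2^T : ℕ):ℝ))
        = 2*(tfun (n*2^(T+1)) : ℝ)/((n:ℝ)*2^(T+1)) := by
      rw [← hcast]
      push_cast
      ring
    rw [Finset.sum_range_succ]
    rw [hlast] at h2
    linarith

lemma sum_bound (n q T : ℕ) (hq : 1 ≤ q) (hn : q^4 ≤ n) :
    ∑ j ∈ range T, 2*(tfun (n*2^(j+1)) : ℝ)/((n:ℝ)*2^(j+1)) ≤ 28/q := by
  have hn1 : 1 ≤ n := le_trans (Nat.one_le_pow _ _ (by omega)) hn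
  have hqR : (0:ℝ) < q := by exact_mod_cast hq
  have hterm : ∀ j : ℕ, 2*(tfun (n*2^(j+1)) : ℝ)/((n:ℝ)*2^(j+1))
      ≤ (4*(7/8)^(j+1))/q := by
    intro j
    set s := n*2^(j+1) with hs
    have hs1 : 1 ≤ s := by
      have : 1 ≤ 2^(j+1) := Nat.one_le_two_pow
      calc 1 ≤ n := hn1
        _ = n * 1 := by ring
        _ ≤ n * 2^(j+1) := Nat.mul_le_mul_left n this
    have hcs : ((s:ℕ):ℝ) = (n:ℝ)*2^(j+1) := by rw [hs]; push_cast; ring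
    have hsR : (0:ℝ) < (s:ℝ) := by exact_mod_cast hs1
    have hnR : (0:ℝ) < (n:ℝ) := by exact_mod_cast hn1
    have hL : (0:ℝ) ≤ 2*(tfun s:ℝ)/((n:ℝ)*2^(j+1)) := by positivity
    have hR : (0:ℝ) ≤ (4*((7:ℝ)/8)^(j+1))/q := by positivity
    apply le_of_pow_le_pow_left₀ (by norm_num : (4:ℕ) ≠ 0) hR
    have ht4 : ((tfun s:ℝ))^4 ≤ 16*(s:ℝ)^3 := by exact_mod_cast tfun_upper s hs1
    have hq4 : (q:ℝ)^4 ≤ (n:ℝ) := by exact_mod_cast hn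
    -- key: q^4 ≤ (7/8)^(4*(j+1)) * s
    have hkey : (q:ℝ)^4 ≤ (((7:ℝ)/8)^(j+1))^4 * (s:ℝ) := by
      have hg : (((7:ℝ)/8)^(j+1))^4 * ((2:ℝ)^(j+1)) = ((2401:ℝ)/2048)^(j+1) := by
        rw [← pow_mul, mul_comm (j+1) 4, pow_mul, ← mul_pow]
        norm_num
      have h1 : (1:ℝ) ≤ ((2401:ℝ)/2048)^(j+1) := one_le_pow₀ (by norm_num)
      calc (q:ℝ)^4 ≤ (n:ℝ) := hq4
        _ = (n:ℝ) * 1 := by ring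
        _ ≤ (n:ℝ) * ((2401:ℝ)/2048)^(j+1) := by
            apply mul_le_mul_of_nonneg_left h1 (le_of_lt hnR)
        _ = (((7:ℝ)/8)^(j+1))^4 * ((n:ℝ) * (2:ℝ)^(j+1)) := by rw [← hg]; ring
        _ = (((7:ℝ)/8)^(j+1))^4 * (s:ℝ) := by rw [hcs]
    rw [← hcs]
    calc (2*(tfun s:ℝ)/(s:ℝ))^4 = 16*((tfun s:ℝ))^4/(s:ℝ)^4 := by
          field_simp
          ring
      _ ≤ 16*(16*(s:ℝ)^3)/(s:ℝ)^4 := by gcongr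
      _ = 256/(s:ℝ) := by
          field_simp
          ring
      _ ≤ 256*((((7:ℝ)/8)^(j+1))^4/(q:ℝ)^4) := by
          rw [div_le_iff₀ hsR]
          have hq4pos : (0:ℝ) < (q:ℝ)^4 := by positivity
          have h1 : (1:ℝ) ≤ (((7:ℝ)/8)^(j+1))^4/(q:ℝ)^4 * (s:ℝ) := by
            rw [div_mul_eq_mul_div, le_div_iff₀ hq4pos, one_mul]
            linarith [hkey]
          calc (256:ℝ) = 256 * 1 := by ring
            _ ≤ 256 * ((((7:ℝ)/8)^(j+1))^4/(q:ℝ)^4 * (s:ℝ)) :=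
                mul_le_mul_of_nonneg_left h1 (by norm_num)
            _ = 256 * ((((7:ℝ)/8)^(j+1))^4/(q:ℝ)^4) * (s:ℝ) := by ring
      _ = ((4*((7:ℝ)/8)^(j+1))/q)^4 := by
          field_simp
          ring
  have hgs : ∑ j ∈ range T, ((7:ℝ)/8)^j ≤ 8 := by
    rw [geom_sum_eq (by norm_num : (7:ℝ)/8 ≠ 1)]
    have h0 : (0:ℝ) ≤ ((7:ℝ)/8)^T := by positivity
    rw [div_le_iff_of_neg (by norm_num : ((7:ℝ)/8) - 1 < 0)]
    nlinarith
  calc ∑ j ∈ range T, 2*(tfun (n*2^(j+1)) : ℝ)/((n:ℝ)*2^(j+1))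
      ≤ ∑ j ∈ range T, (4*((7:ℝ)/8)^(j+1))/q := Finset.sum_le_sum (fun j _ => hterm j)
    _ = (4*(7/8)/q) * ∑ j ∈ range T, ((7:ℝ)/8)^j := by
        rw [Finset.mul_sum]
        apply Finset.sum_congr rfl
        intro j _
        rw [pow_succ]
        ring
    _ ≤ (4*(7/8)/q) * 8 := by
        apply mul_le_mul_of_nonneg_left hgs (by positivity)
    _ = 28/q := by ring
lemma rounding {X : Type} (m N : ℕ) (hm : 0 < m) (hN : 0 < N) (a : Fin m → X) :
    ∃ b : Fin N → X, ∀ S : Set X, |emp b S - emp a S| ≤ (m:ℝ)/N := by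
  classical
  have hglt : ∀ i : Fin N, (i:ℕ)*m/N < m := by
    intro i
    rw [Nat.div_lt_iff_lt_mul hN]
    calc (i:ℕ)*m < N*m := by
          apply Nat.mul_lt_mul_right hm |>.2 i.isLt
      _ = m*N := by ring
  set g : Fin N → Fin m := fun i => ⟨(i:ℕ)*m/N, hglt i⟩ with hg
  refine ⟨a ∘ g, ?_⟩
  intro S
  set l : ℕ → ℕ := fun j => (j*N + (m-1))/m with hl
  have hchar : ∀ (j i : ℕ), l j ≤ i ↔ j*N ≤ i*m := by
    intro j i
    rw [hl]
    simp only
    rw [Nat.div_le_iff_le_mul_add_pred hm]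
    rw [mul_comm m i]
    exact ⟨fun h => Nat.le_of_add_le_add_right h, fun h => Nat.add_le_add_right h _⟩
  have hmono : ∀ j, l j ≤ l (j+1) := by
    intro j
    rw [hl]
    simp only
    apply Nat.div_le_div_right
    have : j*N ≤ (j+1)*N := Nat.mul_le_mul_right N (by omega)
    omega
  have hlN : ∀ j : ℕ, j ≤ m → l j ≤ N := by
    intro j hj
    rw [hl]
    simp only
    rw [Nat.div_le_iff_le_mul_add_pred hm, mul_comm m N]
    have : j*N ≤ m*N := Nat.mul_le_mul_right N hj
    have : j*N ≤ N*m := by rw [mul_comm N m]; omega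
    omega
  -- fiber cardinality
  have hfib : ∀ j : Fin m, #(univ.filter (fun i : Fin N => g i = j))
      = l ((j:ℕ)+1) - l (j:ℕ) := by
    intro j
    have : #(univ.filter (fun i : Fin N => g i = j)) = #(Finset.Ico (l (j:ℕ)) (l ((j:ℕ)+1))) := by
      apply Finset.card_bij (fun (i : Fin N) (_ : i ∈ univ.filter (fun i : Fin N => g i = j)) => (i:ℕ))
      · intro i hi
        rw [mem_filter] at hi
        have hieq : (i:ℕ)*m/N = (j:ℕ) := by
          have := hi.2
          rw [hg] at this
          exact congrArg Fin.val this
        rw [Finset.mem_Ico]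
        constructor
        · rw [hchar, ← hieq]
          exact Nat.div_mul_le_self _ _
        · by_contra hcon
          push_neg at hcon
          rw [hchar] at hcon
          have h2 : (i:ℕ)*m < ((j:ℕ)+1)*N := by
            have h3 := Nat.lt_mul_div_succ ((i:ℕ)*m) hN
            calc (i:ℕ)*m < N*((i:ℕ)*m/N + 1) := h3
              _ = ((i:ℕ)*m/N + 1)*N := by ring
              _ ≤ ((j:ℕ)+1)*N := by
                  apply Nat.mul_le_mul_right
                  rw [hieq]
          omega
      · intro i _ i' _ h
        exact Fin.ext h
      · intro x hx
        rw [Finset.mem_Ico] at hx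
        have hxN : x < N := lt_of_lt_of_le hx.2 (hlN _ (by omega))
        refine ⟨⟨x, hxN⟩, mem_filter.2 ⟨mem_univ _, ?_⟩, rfl⟩
        rw [hg]
        apply Fin.ext
        simp only
        have h1 : (j:ℕ)*N ≤ x*m := (hchar _ _).1 hx.1
        have h2 : ¬ (((j:ℕ)+1)*N ≤ x*m) := by
          rw [← hchar]
          omega
        push_neg at h2
        -- x*m/N = j
        have hle : (j:ℕ) ≤ x*m/N := (Nat.le_div_iff_mul_le hN).2 h1
        have hlt : x*m/N < (j:ℕ)+1 := (Nat.div_lt_iff_lt_mul hN).2 h2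
        omega
    rw [this, Nat.card_Ico]
  -- integer bounds on fibers
  have hfibZ : ∀ j : Fin m, |(m:ℤ) * #(univ.filter (fun i : Fin N => g i = j)) - N| ≤ (m:ℤ) - 1 := by
    intro j
    have hx1 : ((j:ℕ):ℤ)*N ≤ (m:ℤ) * (l (j:ℕ)) := by
      have := (hchar (j:ℕ) (l (j:ℕ))).1 (le_refl _)
      have h2 : ((j:ℕ)*N : ℤ) ≤ ((l (j:ℕ))*m : ℕ) := by exact_mod_cast this
      push_cast at h2 ⊢
      linarith
    have hx2 : (m:ℤ) * (l (j:ℕ)) ≤ ((j:ℕ):ℤ)*N + ((m:ℤ) - 1) := by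
      have h2 : m * (l (j:ℕ)) ≤ (j:ℕ)*N + (m-1) := by
        rw [hl]
        simp only
        rw [mul_comm]
        exact Nat.div_mul_le_self _ _
      have h3 : ((m * l (j:ℕ) : ℕ) : ℤ) ≤ (((j:ℕ)*N + (m-1) : ℕ) : ℤ) := by exact_mod_cast h2
      push_cast [Nat.cast_sub (by omega : 1 ≤ m)] at h3
      push_cast
      linarith
    have hy1 : (((j:ℕ):ℤ)+1)*N ≤ (m:ℤ) * (l ((j:ℕ)+1)) := by
      have := (hchar ((j:ℕ)+1) (l ((j:ℕ)+1))).1 (le_refl _)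
      have h2 : (((j:ℕ)+1)*N : ℤ) ≤ ((l ((j:ℕ)+1))*m : ℕ) := by exact_mod_cast this
      push_cast at h2 ⊢
      linarith
    have hy2 : (m:ℤ) * (l ((j:ℕ)+1)) ≤ (((j:ℕ):ℤ)+1)*N + ((m:ℤ) - 1) := by
      have h2 : m * (l ((j:ℕ)+1)) ≤ ((j:ℕ)+1)*N + (m-1) := by
        rw [hl]
        simp only
        rw [mul_comm]
        exact Nat.div_mul_le_self _ _
      have h3 : ((m * l ((j:ℕ)+1) : ℕ) : ℤ) ≤ ((((j:ℕ)+1)*N + (m-1) : ℕ) : ℤ) := by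
        exact_mod_cast h2
      push_cast [Nat.cast_sub (by omega : 1 ≤ m)] at h3
      push_cast
      linarith
    have hcZ : (#(univ.filter (fun i : Fin N => g i = j)) : ℤ)
        = (l ((j:ℕ)+1) : ℤ) - (l (j:ℕ) : ℤ) := by
      rw [hfib j]
      push_cast [Nat.cast_sub (hmono (j:ℕ))]
      ring
    rw [hcZ, abs_le]
    constructor <;> nlinarith
  -- empirical sums
  have hsum : ∑ i : Fin N, S.indicator (fun _ => (1:ℝ)) (a (g i))
      = ∑ j : Fin m, (#(univ.filter (fun i : Fin N => g i = j)) : ℝ)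
          * S.indicator (fun _ => (1:ℝ)) (a j) := by
    rw [← Finset.sum_fiberwise' univ g (fun j => S.indicator (fun _ => (1:ℝ)) (a j))]
    apply Finset.sum_congr rfl
    intro j _
    rw [Finset.sum_const, nsmul_eq_mul]
  have hNR : (0:ℝ) < N := by exact_mod_cast hN
  have hmR : (0:ℝ) < m := by exact_mod_cast hm
  rw [emp, emp]
  have hco : ∀ i : Fin N, (a ∘ g) i = a (g i) := fun i => rfl
  simp only [hco]
  rw [hsum]
  have hdiff : (∑ j : Fin m, (#(univ.filter (fun i : Fin N => g i = j)) : ℝ)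
          * S.indicator (fun _ => (1:ℝ)) (a j)) / N
      - (∑ i : Fin m, S.indicator (fun _ => (1:ℝ)) (a i)) / m
      = ∑ j : Fin m, S.indicator (fun _ => (1:ℝ)) (a j)
          * ((#(univ.filter (fun i : Fin N => g i = j)) : ℝ)/N - 1/m) := by
    rw [Finset.sum_div, Finset.sum_div, ← Finset.sum_sub_distrib]
    apply Finset.sum_congr rfl
    intro j _
    field_simp
  rw [hdiff]
  calc |∑ j : Fin m, S.indicator (fun _ => (1:ℝ)) (a j)
          * ((#(univ.filter (fun i : Fin N => g i = j)) : ℝ)/N - 1/m)|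
      ≤ ∑ j : Fin m, |S.indicator (fun _ => (1:ℝ)) (a j)
          * ((#(univ.filter (fun i : Fin N => g i = j)) : ℝ)/N - 1/m)| :=
        Finset.abs_sum_le_sum_abs _ _
    _ ≤ ∑ _j : Fin m, ((m:ℝ)-1)/(N*m) := by
        apply Finset.sum_le_sum
        intro j _
        rw [abs_mul]
        have hind : |S.indicator (fun _ => (1:ℝ)) (a j)| ≤ 1 := by
          rw [Set.indicator_apply]
          split <;> simp
        have habs : |(#(univ.filter (fun i : Fin N => g i = j)) : ℝ)/N - 1/m|
            ≤ ((m:ℝ)-1)/(N*m) := by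
          have heq2 : (#(univ.filter (fun i : Fin N => g i = j)) : ℝ)/N - 1/m
              = (((m:ℤ) * #(univ.filter (fun i : Fin N => g i = j)) - N : ℤ) : ℝ)/(N*m) := by
            push_cast
            field_simp
          rw [heq2, abs_div, abs_of_nonneg (by positivity : (0:ℝ) ≤ (N:ℝ)*m)]
          apply (div_le_div_iff_of_pos_right (by positivity : (0:ℝ) < (N:ℝ)*m)).2
          rw [← Int.cast_abs]
          have hfz := hfibZ j
          calc ((|(m:ℤ) * #(univ.filter (fun i : Fin N => g i = j)) - N| : ℤ) : ℝ)
              ≤ (((m:ℤ) - 1 : ℤ) : ℝ) := by exact_mod_cast hfz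
            _ = (m:ℝ) - 1 := by push_cast; ring
        calc |S.indicator (fun _ => (1:ℝ)) (a j)|
              * |(#(univ.filter (fun i : Fin N => g i = j)) : ℝ)/N - 1/m|
            ≤ 1 * (((m:ℝ)-1)/(N*m)) := by
              apply mul_le_mul hind habs (abs_nonneg _) (by norm_num)
          _ = ((m:ℝ)-1)/(N*m) := by ring
    _ = (m:ℝ) * (((m:ℝ)-1)/(N*m)) := by
        rw [Finset.sum_const]
        simp [mul_comm]
    _ = ((m:ℝ)-1)/N := by
        field_simp
    _ ≤ (m:ℝ)/N := by
        apply (div_le_div_iff_of_pos_right hNR).2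
        linarith
end VCP

theorem stmt_7 (d : ℕ) (ε : ℝ) (hε : 0 < ε) :
    ∃ n : ℕ, 0 < n ∧
      ∀ (X : Type) (F : Set (Set X)) (μ : Set X → ℝ),
        VCDimLE F d → IsFAP μ →
        (∃ (m : ℕ) (_ : 0 < m) (a : Fin m → X), ∀ S ∈ F,
          |μ S - (∑ i : Fin m, S.indicator (fun _ => (1 : ℝ)) (a i)) / m| ≤ ε / 2) →
        ∃ a : Fin n → X, ∀ S ∈ F,
          |μ S - (∑ i : Fin n, S.indicator (fun _ => (1 : ℝ)) (a i)) / n| ≤ ε := by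
  classical
  obtain ⟨q, hq1, hq112⟩ : ∃ q : ℕ, 1 ≤ q ∧ (112:ℝ)/ε ≤ q := by
    refine ⟨⌈(112:ℝ)/ε⌉₊+1, by omega, ?_⟩
    push_cast
    linarith [Nat.le_ceil ((112:ℝ)/ε)]
  obtain ⟨n, hqn, hs0, hn0⟩ : ∃ n : ℕ, q^4 ≤ n ∧
      2^(d+1) * (2*d+2)^(2*(2*d+2)) < n ∧ 0 < n :=
    ⟨q^4 + 2^(d+1) * (2*d+2)^(2*(2*d+2)) + 1, by omega, by omega, by omega⟩
  refine ⟨n, hn0, ?_⟩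
  intro X F μ hF hμ hyp
  obtain ⟨m, hm, a, ha⟩ := hyp
  have hnR : (0:ℝ) < n := by exact_mod_cast hn0
  obtain ⟨T, hxT⟩ : ∃ T : ℕ, (16*(m:ℝ))/(ε*(n:ℝ)) ≤ (2:ℝ)^T := by
    refine ⟨⌈(16*(m:ℝ))/(ε*(n:ℝ))⌉₊, ?_⟩
    calc (16*(m:ℝ))/(ε*(n:ℝ)) ≤ (⌈(16*(m:ℝ))/(ε*(n:ℝ))⌉₊ : ℝ) := Nat.le_ceil _
      _ ≤ (2:ℝ)^(⌈(16*(m:ℝ))/(ε*(n:ℝ))⌉₊) := by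
          have h1 := Nat.lt_two_pow_self (n := ⌈(16*(m:ℝ))/(ε*(n:ℝ))⌉₊)
          have h2 : ((⌈(16*(m:ℝ))/(ε*(n:ℝ))⌉₊ : ℕ):ℝ)
              ≤ ((2^(⌈(16*(m:ℝ))/(ε*(n:ℝ))⌉₊) : ℕ):ℝ) := by exact_mod_cast h1.le
          push_cast at h2
          exact h2
  have hNpos : 0 < n*2^T := by positivity
  obtain ⟨b, hb⟩ := VCP.rounding m (n*2^T) hm hNpos a
  obtain ⟨b', hb'⟩ := VCP.iterate F d hF n hs0 T b
  have hsum := VCP.sum_bound n q T hq1 hqn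
  have hq0 : (0:ℝ) < q := by exact_mod_cast hq1
  have hεq : (28:ℝ)/q ≤ ε/4 := by
    rw [div_le_div_iff₀ hq0 (by norm_num : (0:ℝ) < 4)]
    have h2 : ε * ((112:ℝ)/ε) = 112 := by field_simp
    nlinarith
  have hround : (m:ℝ)/((n*2^T : ℕ):ℝ) ≤ ε/16 := by
    have hεn : (0:ℝ) < ε * n := by positivity
    have h1 : (16*(m:ℝ)) ≤ ε*n*(2:ℝ)^T := by
      have h2 := hxT
      rw [div_le_iff₀ hεn] at h2
      nlinarith
    have hden : (0:ℝ) < ((n*2^T : ℕ):ℝ) := by exact_mod_cast hNpos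
    rw [div_le_div_iff₀ hden (by norm_num : (0:ℝ) < 16)]
    push_cast
    nlinarith
  refine ⟨b', ?_⟩
  intro S hS
  have h1 : |μ S - VCP.emp a S| ≤ ε/2 := ha S hS
  have h2 := hb S
  have h3 := hb' S hS
  have h3' : |VCP.emp b' S - VCP.emp b S| ≤ 28/q := le_trans h3 hsum
  show |μ S - VCP.emp b' S| ≤ ε
  have htri1 : |μ S - VCP.emp b' S| ≤ |μ S - VCP.emp a S| + |VCP.emp a S - VCP.emp b' S| :=
    abs_sub_le _ _ _
  have htri2 : |VCP.emp a S - VCP.emp b' S|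
      ≤ |VCP.emp a S - VCP.emp b S| + |VCP.emp b S - VCP.emp b' S| := abs_sub_le _ _ _
  rw [abs_sub_comm] at h2
  rw [abs_sub_comm] at h3'
  linarith
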